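/- Let k ≥ 3 and let G be a finite simple graph on n = 2k−3 vertices that admits a proper 2-coloring, and suppose that every k-element subset of the vertices of G contains at least one edge of G. Then there exists a vertex x of G such that for every proper 2-coloring c of G, the color class containing x is strictly larger than the other color class. -/

import Mathlib

private lemma hw_modular' {V : Type*} [DecidableEq V] (A B T T' : Finset V) :
    (((A ∩ (T ∪ T')).card : ℤ) - ((B ∩ (T ∪ T')).card : ℤ))
      + (((A ∩ (T ∩ T')).card : ℤ) - ((B ∩ (T ∩ T')).card : ℤ))
      = (((A ∩ T).card : ℤ) - ((B ∩ T).card : ℤ))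
        + (((A ∩ T').card : ℤ) - ((B ∩ T').card : ℤ)) := by
  have e1 : A ∩ (T ∪ T') = (A ∩ T) ∪ (A ∩ T') := Finset.inter_union_distrib_left ..
  have e2 : B ∩ (T ∪ T') = (B ∩ T) ∪ (B ∩ T') := Finset.inter_union_distrib_left ..
  have e3 : A ∩ (T ∩ T') = (A ∩ T) ∩ (A ∩ T') := by
    ext v
    simp only [Finset.mem_inter]
    tauto
  have e4 : B ∩ (T ∩ T') = (B ∩ T) ∩ (B ∩ T') := by
    ext v
    simp only [Finset.mem_inter]
    tauto
  rw [e1, e2, e3, e4]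
  have h1 := Finset.card_union_add_card_inter (A ∩ T) (A ∩ T')
  have h2 := Finset.card_union_add_card_inter (B ∩ T) (B ∩ T')
  push_cast
  omega

private lemma inf_family' {V : Type*} [DecidableEq V] [Fintype V]
    (P : Finset V → Prop) (huniv : P Finset.univ)
    (hinter : ∀ a b, P a → P b → P (a ∩ b)) :
    ∀ s : Finset (Finset V), (∀ T ∈ s, P T) → P (s.inf id) := by
  intro s
  induction s using Finset.induction_on with
  | empty => intro _; simpa [Finset.top_eq_univ] using huniv
  | @insert a s ha ih =>
      intro hmem
      rw [Finset.inf_insert]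
      have := hinter a (s.inf id) (hmem _ (Finset.mem_insert_self _ _))
        (ih fun T hT => hmem T (Finset.mem_insert_of_mem hT))
      simpa [Finset.inf_eq_inter] using this

private lemma classCard' {n : ℕ} (c₀ c : Fin n → Bool) (b : Bool) :
    ((Finset.univ.filter fun v => c v = b).card : ℤ)
      = ((Finset.univ.filter fun v => c₀ v = b).card : ℤ)
        - (((Finset.univ.filter fun v => c₀ v = b)
            ∩ (Finset.univ.filter fun v => c v ≠ c₀ v)).card : ℤ)
        + (((Finset.univ.filter fun v => c₀ v = !b)
            ∩ (Finset.univ.filter fun v => c v ≠ c₀ v)).card : ℤ) := by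
  have hset : (Finset.univ.filter fun v => c v = b)
      = ((Finset.univ.filter fun v => c₀ v = b)
            \ (Finset.univ.filter fun v => c v ≠ c₀ v))
        ∪ ((Finset.univ.filter fun v => c₀ v = !b)
            ∩ (Finset.univ.filter fun v => c v ≠ c₀ v)) := by
    ext v
    simp only [Finset.mem_filter, Finset.mem_union, Finset.mem_sdiff, Finset.mem_inter,
      Finset.mem_univ, true_and, ne_eq, not_not]
    cases hcv : c v <;> cases h0 : c₀ v <;> cases b <;> simp
  rw [hset, Finset.card_union_of_disjoint]
  · have h1 := Finset.card_inter_add_card_sdiff (Finset.univ.filter fun v => c₀ v = b)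
      (Finset.univ.filter fun v => c v ≠ c₀ v)
    push_cast
    omega
  · refine Finset.disjoint_left.2 fun v hv1 hv2 => ?_
    have hb1 := (Finset.mem_filter.1 (Finset.mem_sdiff.1 hv1).1).2
    have hb2 := (Finset.mem_filter.1 (Finset.mem_inter.1 hv2).1).2
    cases b <;> simp_all

private lemma bool_ne_iff' {a b a' b' : Bool} (h1 : a ≠ b) (h2 : a' ≠ b') :
    (¬ a = a') ↔ (¬ b = b') := by
  cases a <;> cases b <;> cases a' <;> cases b' <;> simp_all

set_option maxHeartbeats 1000000 in
/-- If `k ≥ 3` and `G` is a 2-colorable graph on `n = 2k-3` vertices such that every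
`k`-element vertex subset contains an edge, then some vertex `x` lies in the strictly
larger color class of every proper 2-coloring of `G`. -/
theorem stmt_4 (k : ℕ) (hk : 3 ≤ k) (G : SimpleGraph (Fin (2 * k - 3)))
    (hcol : ∃ c : Fin (2 * k - 3) → Bool, ∀ u v, G.Adj u v → c u ≠ c v)
    (hcover : ∀ s : Finset (Fin (2 * k - 3)), s.card = k →
      ∃ u ∈ s, ∃ v ∈ s, G.Adj u v) :
    ∃ x : Fin (2 * k - 3), ∀ c : Fin (2 * k - 3) → Bool,
      (∀ u v, G.Adj u v → c u ≠ c v) →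
      (Finset.univ.filter fun v => c v ≠ c x).card <
      (Finset.univ.filter fun v => c v = c x).card := by
  classical
  obtain ⟨c₀, hc₀⟩ := hcol
  -- every color class of a proper coloring has at most k-1 vertices
  have classle : ∀ (c : Fin (2 * k - 3) → Bool), (∀ u v, G.Adj u v → c u ≠ c v) →
      ∀ b : Bool, (Finset.univ.filter fun v => c v = b).card ≤ k - 1 := by
    intro c hc b
    by_contra hcon
    push_neg at hcon
    have hk' : k ≤ (Finset.univ.filter fun v => c v = b).card := by omega
    obtain ⟨s, hs, hscard⟩ := Finset.exists_subset_card_eq hk'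
    obtain ⟨u, hu, v, hv, huv⟩ := hcover s hscard
    have h1 := (Finset.mem_filter.1 (hs hu)).2
    have h2 := (Finset.mem_filter.1 (hs hv)).2
    exact hc u v huv (h1.trans h2.symm)
  -- the two classes partition the vertex set
  have classsum : ∀ (c : Fin (2 * k - 3) → Bool) (b : Bool),
      (Finset.univ.filter fun v => c v = b).card
        + (Finset.univ.filter fun v => c v = !b).card = 2 * k - 3 := by
    intro c b
    have h := Finset.card_filter_add_card_filter_not
      (s := (Finset.univ : Finset (Fin (2 * k - 3)))) (p := fun v => c v = b)
    have heq : (Finset.univ.filter fun v => ¬ c v = b)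
        = (Finset.univ.filter fun v => c v = !b) := by
      apply Finset.filter_congr
      intro v _
      cases c v <;> cases b <;> simp
    rw [heq] at h
    simpa using h
  -- pick the majority color b for c₀
  have hbex : ∃ b : Bool, (Finset.univ.filter fun v => c₀ v = b).card = k - 1 := by
    by_contra hcon
    push_neg at hcon
    have ht := hcon true
    have hf := hcon false
    have hs := classsum c₀ true
    have h1 := classle c₀ hc₀ true
    have h2 := classle c₀ hc₀ false
    simp only [Bool.not_true] at hs
    omega
  obtain ⟨b, hbA⟩ := hbex
  have hbB : (Finset.univ.filter fun v => c₀ v = !b).card = k - 2 := by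
    have := classsum c₀ b
    omega
  set A := Finset.univ.filter fun v => c₀ v = b with hAdef
  set B := Finset.univ.filter fun v => c₀ v = !b with hBdef
  -- the weight of a component-closed set is 0 or 1
  have hval : ∀ T : Finset (Fin (2 * k - 3)), (∀ u v, G.Adj u v → (u ∈ T ↔ v ∈ T)) →
      ((A ∩ T).card : ℤ) - ((B ∩ T).card : ℤ) = 0
        ∨ ((A ∩ T).card : ℤ) - ((B ∩ T).card : ℤ) = 1 := by
    intro T hT
    set c : Fin (2 * k - 3) → Bool := fun v => if v ∈ T then !c₀ v else c₀ v with hcdef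
    have hproper : ∀ u v, G.Adj u v → c u ≠ c v := by
      intro u v huv
      have h1 := hc₀ u v huv
      have h2 := hT u v huv
      by_cases hu : u ∈ T
      · have hv : v ∈ T := h2.1 hu
        simp only [hcdef, hu, hv, if_true]
        cases h0u : c₀ u <;> cases h0v : c₀ v <;> simp_all
      · have hv : v ∉ T := fun h => hu (h2.2 h)
        simpa [hcdef, hu, hv] using h1
    have hD : (Finset.univ.filter fun v => c v ≠ c₀ v) = T := by
      ext v
      by_cases hv : v ∈ T <;> simp [hcdef, hv]
    have hcls := classCard' c₀ c b
    rw [hD, ← hAdef, ← hBdef] at hcls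
    have h1 := classle c hproper b
    have h2 := classle c hproper (!b)
    have h3 := classsum c b
    omega
  -- the family of component-closed sets of weight 1 is closed under intersection
  set P : Finset (Fin (2 * k - 3)) → Prop := fun T =>
    (∀ u v, G.Adj u v → (u ∈ T ↔ v ∈ T))
      ∧ ((A ∩ T).card : ℤ) - ((B ∩ T).card : ℤ) = 1 with hPdef
  have hPuniv : P Finset.univ := by
    constructor
    · intro u v _; simp
    · simp only [Finset.inter_univ]
      omega
  have hPinter : ∀ T T', P T → P T' → P (T ∩ T') := by
    rintro T T' ⟨hT, hT1⟩ ⟨hT', hT'1⟩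
    have hccU : ∀ u v, G.Adj u v → (u ∈ T ∪ T' ↔ v ∈ T ∪ T') := by
      intro u v huv
      have h1 := hT u v huv
      have h2 := hT' u v huv
      simp only [Finset.mem_union]
      tauto
    have hccI : ∀ u v, G.Adj u v → (u ∈ T ∩ T' ↔ v ∈ T ∩ T') := by
      intro u v huv
      have h1 := hT u v huv
      have h2 := hT' u v huv
      simp only [Finset.mem_inter]
      tauto
    have hm := hw_modular' A B T T'
    have hU := hval _ hccU
    have hI := hval _ hccI
    exact ⟨hccI, by omega⟩
  set F : Finset (Finset (Fin (2 * k - 3))) :=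
    Finset.univ.filter P with hFdef
  set Tstar : Finset (Fin (2 * k - 3)) := F.inf id with hTstardef
  have hPstar : P Tstar := by
    refine inf_family' P hPuniv hPinter F ?_
    intro T hT
    exact (Finset.mem_filter.1 hT).2
  have hsubStar : ∀ T, P T → Tstar ⊆ T := by
    intro T hT
    have hmem : T ∈ F := Finset.mem_filter.2 ⟨Finset.mem_univ _, hT⟩
    have h := Finset.inf_le (f := id) hmem
    simpa using h
  -- pick x in the majority part of Tstar
  have hne : (A ∩ Tstar).Nonempty := by
    rw [← Finset.card_pos]
    have := hPstar.2
    omega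
  obtain ⟨x, hx⟩ := hne
  have hxA : x ∈ A := (Finset.mem_inter.1 hx).1
  have hxT : x ∈ Tstar := (Finset.mem_inter.1 hx).2
  have hxb : c₀ x = b := by
    have := Finset.mem_filter.1 (hAdef ▸ hxA)
    exact this.2
  refine ⟨x, ?_⟩
  intro c hc
  set D := Finset.univ.filter fun v => c v ≠ c₀ v with hDdef
  have hccD : ∀ u v, G.Adj u v → (u ∈ D ↔ v ∈ D) := by
    intro u v huv
    have h1 := hc u v huv
    have h2 := hc₀ u v huv
    simp only [hDdef, Finset.mem_filter, Finset.mem_univ, true_and, ne_eq]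
    exact bool_ne_iff' h1 h2
  have hcls := classCard' c₀ c b
  rw [← hDdef, ← hAdef, ← hBdef] at hcls
  have hsumc := classsum c b
  have h1 := classle c hc b
  have h2 := classle c hc (!b)
  -- partition of the goal filters
  have hpart : (Finset.univ.filter fun v => c v = c x).card
      + (Finset.univ.filter fun v => c v ≠ c x).card = 2 * k - 3 := by
    have h := classsum c (c x)
    have heq : (Finset.univ.filter fun v => c v ≠ c x)
        = (Finset.univ.filter fun v => c v = !(c x)) := by
      apply Finset.filter_congr
      intro v _
      cases c v <;> cases hcx : c x <;> simp
    rw [heq]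
    exact h
  have hbig : (Finset.univ.filter fun v => c v = c x).card = k - 1 := by
    rcases hval D hccD with h0 | h0
    · -- x is not flipped, c x = b
      have hPD : P (Finset.univ \ D) := by
        constructor
        · intro u v huv
          have := hccD u v huv
          simp only [Finset.mem_sdiff, Finset.mem_univ, true_and]
          tauto
        · have hA' : A ∩ (Finset.univ \ D) = A \ D := by
            ext v; simp [Finset.mem_sdiff]
          have hB' : B ∩ (Finset.univ \ D) = B \ D := by
            ext v; simp [Finset.mem_sdiff]
          rw [hA', hB']
          have ha := Finset.card_inter_add_card_sdiff A D
          have hb := Finset.card_inter_add_card_sdiff B D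
          omega
      have hxnD : x ∉ D := (Finset.mem_sdiff.1 (hsubStar _ hPD hxT)).2
      have hcx : c x = b := by
        have : c x = c₀ x := by
          by_contra hne
          exact hxnD (hDdef ▸ Finset.mem_filter.2 ⟨Finset.mem_univ _, hne⟩)
        rw [this, hxb]
      rw [hcx] at hpart ⊢
      omega
    · -- x is flipped, c x = !b
      have hPD : P D := ⟨hccD, h0⟩
      have hxD : x ∈ D := hsubStar _ hPD hxT
      have hcx : c x = !b := by
        have h3 : c x ≠ c₀ x := by
          have hx' := hxD
          rw [hDdef] at hx'
          exact (Finset.mem_filter.1 hx').2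
        rw [hxb] at h3
        exact Bool.eq_not_iff.mpr h3
      rw [hcx] at hpart ⊢
      have hsum2 := classsum c b
      omega
  omega
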